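/- Let (X, ‖·‖) be a Banach space and let (xₙ) be a sequence in X such that for all n > l, ‖xₙ − x_l‖ ≤ A_{n,l} + κ sup_{m>k≥ l−1} ‖x_m − x_k‖ with κ ∈ (0,1) and A_{n,l} → 0 as n,l → ∞, and such that the sup on the right-hand side is finite. Then (xₙ) is a Cauchy sequence. -/

import Mathlib

open Set

/-- Abstract convergence argument (Section 5.3): a contraction estimate up to
vanishing terms `A n l` forces the sequence to be Cauchy. -/
theorem cauchy_from_contraction
    {X : Type*} [NormedAddCommGroup X] [CompleteSpace X]
    (x : ℕ → X) (A : ℕ → ℕ → ℝ) (κ : ℝ) (hκ : κ ∈ Set.Ioo (0:ℝ) 1)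
    (hA_nonneg : ∀ n l, 0 ≤ A n l)
    (hA_to_zero : ∀ δ > (0:ℝ), ∃ N, ∀ n l, N ≤ l → l < n → A n l ≤ δ)
    (hbdd : BddAbove (Set.range fun p : ℕ × ℕ => ‖x p.1 - x p.2‖))
    (hrec : ∀ n l, l < n →
      ‖x n - x l‖ ≤ A n l +
        κ * sSup ((fun p : ℕ × ℕ => ‖x p.1 - x p.2‖) '' {p | l - 1 ≤ p.2 ∧ p.2 < p.1})) :
    CauchySeq x := by
  set f : ℕ × ℕ → ℝ := fun p => ‖x p.1 - x p.2‖ with hf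
  set T : ℕ → ℝ := fun k => sSup (f '' {p | k ≤ p.2 ∧ p.2 < p.1}) with hT
  have hbddT : ∀ k, BddAbove (f '' {p : ℕ × ℕ | k ≤ p.2 ∧ p.2 < p.1}) := fun k =>
    hbdd.mono (Set.image_subset_range f _)
  have hmem : ∀ k, f (k + 1, k) ∈ f '' {p : ℕ × ℕ | k ≤ p.2 ∧ p.2 < p.1} := fun k =>
    ⟨(k + 1, k), ⟨le_rfl, Nat.lt_succ_self k⟩, rfl⟩
  have hne : ∀ k, (f '' {p : ℕ × ℕ | k ≤ p.2 ∧ p.2 < p.1}).Nonempty := fun k =>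
    ⟨_, hmem k⟩
  have hT0 : ∀ k, 0 ≤ T k := fun k =>
    le_trans (norm_nonneg _) (le_csSup (hbddT k) (hmem k))
  have hanti : Antitone T := by
    intro a b hab
    exact csSup_le_csSup (hbddT a) (hne b)
      (Set.image_mono (f := f) (fun p hp => ⟨le_trans hab hp.1, hp.2⟩))
  have hbelow : BddBelow (Set.range T) := ⟨0, fun y ⟨k, hk⟩ => hk ▸ hT0 k⟩
  set b : ℝ := ⨅ k, T k with hb
  have htend : Filter.Tendsto T Filter.atTop (nhds b) :=
    tendsto_atTop_ciInf hanti hbelow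
  have hb0 : 0 ≤ b := le_ciInf hT0
  -- key estimate
  have key : ∀ δ > (0:ℝ), b ≤ δ + κ * b := by
    intro δ hδ
    obtain ⟨N, hN⟩ := hA_to_zero δ hδ
    have hev : ∀ᶠ k in Filter.atTop, b ≤ δ + κ * T k := by
      filter_upwards [Filter.eventually_ge_atTop N] with k hk
      have hstep : T (k + 1) ≤ δ + κ * T k := by
        apply csSup_le (hne (k + 1))
        rintro y ⟨⟨n, l⟩, ⟨hl1, hl2⟩, rfl⟩
        simp only [Set.mem_setOf_eq] at hl1 hl2
        calc f (n, l) ≤ A n l + κ * sSup (f '' {p : ℕ × ℕ | l - 1 ≤ p.2 ∧ p.2 < p.1}) :=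
              hrec n l hl2
          _ ≤ δ + κ * T k := by
              have hAle : A n l ≤ δ := hN n l (le_trans hk (Nat.le_of_succ_le hl1)) hl2
              have hsub : sSup (f '' {p : ℕ × ℕ | l - 1 ≤ p.2 ∧ p.2 < p.1}) ≤ T k := by
                apply csSup_le_csSup (hbddT k) (hne (l - 1))
                apply Set.image_mono
                intro p hp
                exact ⟨le_trans (by omega) hp.1, hp.2⟩
              exact add_le_add hAle (mul_le_mul_of_nonneg_left hsub (le_of_lt hκ.1))
      exact le_trans (ciInf_le hbelow (k + 1)) hstep
    have htend' : Filter.Tendsto (fun k => δ + κ * T k) Filter.atTop (nhds (δ + κ * b)) :=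
      ((htend.const_mul κ).const_add δ)
    exact ge_of_tendsto htend' hev
  have hble : b ≤ 0 := by
    by_contra h
    push_neg at h
    have hδ : (0:ℝ) < (1 - κ) * b / 2 := by
      have h1 : (0:ℝ) < 1 - κ := by linarith [hκ.2]
      positivity
    have := key _ hδ
    nlinarith [hκ.2]
  have hbeq : b = 0 := le_antisymm hble hb0
  have htend0 : Filter.Tendsto T Filter.atTop (nhds 0) := hbeq ▸ htend
  apply cauchySeq_of_le_tendsto_0 T _ htend0
  intro n m N hn hm
  rcases lt_trichotomy n m with h | h | h
  · have : f (m, n) ≤ T N := le_csSup (hbddT N) ⟨(m, n), ⟨hn, h⟩, rfl⟩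
    rw [dist_eq_norm, ← norm_neg]
    simpa [f, neg_sub] using this
  · simp [h, hT0 N]
  · have : f (n, m) ≤ T N := le_csSup (hbddT N) ⟨(n, m), ⟨hm, h⟩, rfl⟩
    rw [dist_eq_norm]
    exact this
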